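/- If a symmetric positive-definite matrix Σ solves the Lyapunov equation ΣH + HΣ = ηC where C = (1/B)H, H is symmetric positive definite, and η, B > 0, then Σ = (η/(2B))·I. -/

import Mathlib

open Matrix
open scoped MatrixOrder

lemma psd_trace_zero {n : ℕ} {M : Matrix (Fin n) (Fin n) ℝ}
    (hM : M.PosSemidef) (ht : M.trace = 0) : M = 0 := by
  obtain ⟨N, rfl⟩ : ∃ N : Matrix (Fin n) (Fin n) ℝ, M = Nᴴ * N := by
    refine ⟨CFC.sqrt M, ?_⟩
    rw [(CFC.sqrt_nonneg M).posSemidef.isHermitian.eq, CFC.sqrt_mul_sqrt_self M hM.nonneg]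
  suffices hN : N = 0 by simp [hN]
  have h : ∀ i ∈ Finset.univ, ∀ j ∈ Finset.univ, N i j * N i j = 0 := by
    have ht' : (∑ j, ∑ i, N i j * N i j) = 0 := by
      simpa [Matrix.trace, Matrix.mul_apply, Matrix.diag] using ht
    rw [Finset.sum_comm] at ht'
    have := (Finset.sum_eq_zero_iff_of_nonneg (fun i _ =>
      Finset.sum_nonneg (fun j _ => mul_self_nonneg (N i j)))).mp ht'
    intro i _ j _
    exact (Finset.sum_eq_zero_iff_of_nonneg (fun j _ => mul_self_nonneg (N i j))).mp
      (this i (Finset.mem_univ i)) j (Finset.mem_univ j)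
  ext i j
  simpa using mul_self_eq_zero.mp (h i (Finset.mem_univ i) j (Finset.mem_univ j))

/-- If a symmetric positive-definite matrix `Σ` solves the Lyapunov equation
`ΣH + HΣ = ηC` where `C = (1/B)H`, `H` is symmetric positive definite, and `η, B > 0`,
then `Σ = (η/(2B))·I`. -/
theorem stmt11 {n : ℕ} (H S : Matrix (Fin n) (Fin n) ℝ) (η B : ℝ)
    (hη : 0 < η) (hB : 0 < B) (hH : H.PosDef) (hS : S.PosDef)
    (heq : S * H + H * S = η • ((1 / B) • H)) :
    S = (η / (2 * B)) • (1 : Matrix (Fin n) (Fin n) ℝ) := by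
  set c : ℝ := η / (2 * B) with hc
  set T : Matrix (Fin n) (Fin n) ℝ := S - c • 1 with hT
  have hTH : T * H + H * T = 0 := by
    have : c • H + c • H = η • ((1 / B) • H) := by
      rw [smul_smul, ← add_smul, hc]
      congr 1
      field_simp
      ring
    simp only [hT, Matrix.sub_mul, Matrix.mul_sub, Matrix.smul_mul, Matrix.mul_smul,
      Matrix.one_mul, Matrix.mul_one]
    rw [sub_add_sub_comm, heq, ← this]
    abel
  have hTherm : T.IsHermitian := by
    have h1 : (c • (1 : Matrix (Fin n) (Fin n) ℝ)).IsHermitian := by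
      simp [Matrix.IsHermitian, Matrix.conjTranspose_smul]
    exact hS.isHermitian.sub h1
  -- trace argument : T H T is PSD with trace 0
  have hTHT : (Tᴴ * H * T).PosSemidef := hH.posSemidef.conjTranspose_mul_mul_same T
  have htr : (Tᴴ * H * T).trace = 0 := by
    have h1 : Tᴴ * H * T = T * H * T := by rw [hTherm.eq]
    have h2 : T * (T * H + H * T) = 0 := by rw [hTH, Matrix.mul_zero]
    have h3 : T * (T * H) + T * (H * T) = 0 := by rw [← Matrix.mul_add]; exact h2
    have h4 : (T * (T * H)).trace + (T * (H * T)).trace = 0 := by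
      rw [← Matrix.trace_add, h3, Matrix.trace_zero]
    have h5 : (T * (T * H)).trace = (T * H * T).trace := by
      rw [Matrix.trace_mul_comm T (T * H)]
    have h6 : (T * (H * T)).trace = (T * H * T).trace := by rw [← Matrix.mul_assoc]
    rw [h1]
    linarith [h4, h5.symm ▸ h4]
  have hzero : Tᴴ * H * T = 0 := psd_trace_zero hTHT htr
  -- write H = P * P with P = sqrt
  set P := CFC.sqrt H with hP
  have hPP : P * P = H := CFC.sqrt_mul_sqrt_self H hH.posSemidef.nonneg
  have hPT : P * T = 0 := by
    have : (P * T)ᴴ * (P * T) = 0 := by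
      have hPH : Pᴴ = P := (CFC.sqrt_nonneg H).posSemidef.isHermitian.eq
      calc (P * T)ᴴ * (P * T) = Tᴴ * (Pᴴ * P) * T := by
            rw [Matrix.conjTranspose_mul]; noncomm_ring
        _ = Tᴴ * H * T := by rw [hPH, hPP]
        _ = 0 := hzero
    exact Matrix.conjTranspose_mul_self_eq_zero.mp this
  have hPunit : IsUnit P.det := by
    have : P.det * P.det = H.det := by rw [← Matrix.det_mul, hPP]
    have hd : H.det ≠ 0 := ne_of_gt hH.det_pos
    exact isUnit_iff_ne_zero.mpr (fun h => hd (by rw [← this, h, mul_zero]))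
  have hTzero : T = 0 := by
    have := congrArg (fun M => P⁻¹ * M) hPT
    simpa [← Matrix.mul_assoc, Matrix.nonsing_inv_mul P hPunit] using this
  have := sub_eq_zero.mp hTzero
  rw [this]
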